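/- The inclusion Δ¹ ∪_{Δ⁰} Δ^{n+1} → Δ^{n+2} is inner anodyne, where Δ^{n+2} is identified with the join Δ¹ ⋆ Δⁿ and the pushout glues the edge Δ¹ = Δ¹ ⋆ ∅ to the cone Δ^{n+1} = Δ⁰ ⋆ Δⁿ along their common vertex Δ⁰. -/

import Mathlib

open CategoryTheory Simplicial Limits

/-- A map of simplicial sets is an inner fibration if it has the right lifting property
with respect to all inner horn inclusions. -/
def InnerFibration {X Y : SSet} (p : X ⟶ Y) : Prop :=
  ∀ (n : ℕ) (i : Fin (n + 1)), 0 < (i : ℕ) → (i : ℕ) < n →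
    HasLiftingProperty ((SSet.horn n i).ι) p

/-- A map of simplicial sets is inner anodyne if it lies in the saturation of the inner
horn inclusions, equivalently (by the small object argument) if it has the left lifting
property with respect to all inner fibrations. -/
def InnerAnodyne {A B : SSet} (f : A ⟶ B) : Prop :=
  ∀ ⦃X Y : SSet⦄ (p : X ⟶ Y), InnerFibration p → HasLiftingProperty f p

/-- The vertex `1` of `Δ[1]`. -/
def v₁ : (Δ[0] : SSet) ⟶ Δ[1] :=
  SSet.stdSimplex.map (SimplexCategory.const (SimplexCategory.mk 0) (SimplexCategory.mk 1) 1)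

/-- The cone point (vertex `0`) of `Δ[n+1] = Δ⁰ ⋆ Δⁿ`. -/
def v₀ (n : ℕ) : (Δ[0] : SSet) ⟶ Δ[n + 1] :=
  SSet.stdSimplex.map
    (SimplexCategory.const (SimplexCategory.mk 0) (SimplexCategory.mk (n + 1)) 0)

/-- The initial edge `{0,1}` of `Δ[n+2] = Δ¹ ⋆ Δⁿ`. -/
def initialEdge (n : ℕ) : (Δ[1] : SSet) ⟶ Δ[n + 2] :=
  SSet.stdSimplex.map
    (SimplexCategory.mkHom ⟨Fin.castLE (by omega), fun _ _ h => h⟩)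

/-- The face `{1,…,n+2}` of `Δ[n+2] = Δ¹ ⋆ Δⁿ`, i.e. the cone `Δ⁰ ⋆ Δⁿ`. -/
def coneFace (n : ℕ) : (Δ[n + 1] : SSet) ⟶ Δ[n + 2] :=
  SSet.stdSimplex.map (SimplexCategory.δ 0)

lemma square_comm (n : ℕ) : v₁ ≫ initialEdge n = v₀ n ≫ coneFace n := by
  dsimp only [v₁, initialEdge, v₀, coneFace]
  rw [← (SSet.stdSimplex : SimplexCategory ⥤ SSet).map_comp,
    ← (SSet.stdSimplex : SimplexCategory ⥤ SSet).map_comp]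
  congr 1

universe u

namespace Stmt18Aux
open SimplexCategory
variable {n : ℕ}
variable {n : ℕ}



/-- The set of "high" vertices (≥ 2) hit by a simplex of `Δ[n+2]`. -/
def tset {m : SimplexCategory} (α : m ⟶ ⦋n+2⦌) : Finset (Fin (n+3)) :=
  (Finset.image α.toOrderHom Finset.univ).filter (fun j => 2 ≤ (j : ℕ))

lemma mem_tset {m : SimplexCategory} (α : m ⟶ ⦋n+2⦌) {a : Fin (n+3)} :
    a ∈ tset α ↔ (∃ i, α.toOrderHom i = a) ∧ 2 ≤ (a : ℕ) := by
  simp [tset]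

lemma tset_comp_subset {m m' : SimplexCategory} (g : m' ⟶ m) (α : m ⟶ ⦋n+2⦌) :
    tset (g ≫ α) ⊆ tset α := by
  intro a ha
  rw [mem_tset] at ha ⊢
  obtain ⟨⟨i, hi⟩, h2⟩ := ha
  exact ⟨⟨g.toOrderHom i, hi⟩, h2⟩

/-- The filtration predicate: a simplex is in the `k`-th stage. -/
def Pk (k : ℕ) {m : SimplexCategory} (α : m ⟶ ⦋n+2⦌) : Prop :=
  (∀ i, (α.toOrderHom i : ℕ) ≤ 1) ∨ (∀ i, α.toOrderHom i ≠ 0) ∨ (tset α).card ≤ k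

lemma Pk_mono {k k' : ℕ} (h : k ≤ k') {m : SimplexCategory} {α : m ⟶ ⦋n+2⦌} :
    Pk k α → Pk k' α := by
  rintro (h1 | h1 | h1)
  · exact Or.inl h1
  · exact Or.inr (Or.inl h1)
  · exact Or.inr (Or.inr (h1.trans h))

lemma Pk_comp {k : ℕ} {m m' : SimplexCategory} (g : m' ⟶ m) {α : m ⟶ ⦋n+2⦌} (h : Pk k α) :
    Pk k (g ≫ α) := by
  rcases h with h1 | h1 | h1
  · exact Or.inl fun i => h1 _
  · exact Or.inr (Or.inl fun i => h1 _)
  · exact Or.inr (Or.inr ((Finset.card_le_card (tset_comp_subset g α)).trans h1))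

lemma Pk_top {m : SimplexCategory} (α : m ⟶ ⦋n+2⦌) : Pk (n+1) α := by
  refine Or.inr (Or.inr ?_)
  have hsub : tset α ⊆ Finset.univ.filter (fun j : Fin (n+3) => 2 ≤ (j : ℕ)) :=
    Finset.filter_subset_filter _ (Finset.subset_univ _)
  have hcard : (Finset.univ.filter (fun j : Fin (n+3) => 2 ≤ (j : ℕ))).card = n + 1 := by
    have h2 : (Finset.univ.filter (fun j : Fin (n+3) => ¬ 2 ≤ (j : ℕ))) =
        ({0, 1} : Finset (Fin (n+3))) := by
      ext j
      simp only [Finset.mem_filter, Finset.mem_univ, true_and, Finset.mem_insert,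
        Finset.mem_singleton, not_le, Fin.ext_iff, Fin.val_zero, Fin.val_one]
      constructor
      · intro h; omega
      · rintro (h | h) <;> omega
    have := Finset.card_filter_add_card_filter_not
      (s := (Finset.univ : Finset (Fin (n+3)))) (p := fun j => 2 ≤ (j : ℕ))
    rw [h2] at this
    have hc2 : ({0, 1} : Finset (Fin (n+3))).card = 2 := by
      rw [Finset.card_insert_of_notMem (by simp [Fin.ext_iff]), Finset.card_singleton]
    simp only [Finset.card_univ, Fintype.card_fin] at this
    omega
  exact (Finset.card_le_card hsub).trans_eq hcard



/-- The inclusion `⦋1⦌ → ⦋n+2⦌` onto `{0,1}` (same as in `initialEdge`). -/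
def edgeHom (n : ℕ) : (⦋1⦌ : SimplexCategory) ⟶ ⦋n+2⦌ :=
  SimplexCategory.mkHom ⟨Fin.castLE (by omega), fun _ _ h => h⟩

/-- Factor a simplex avoiding vertex `0` through `δ 0`. -/
def predHom {m : SimplexCategory} (α : m ⟶ ⦋n+2⦌) (h0 : ∀ i, α.toOrderHom i ≠ 0) :
    m ⟶ ⦋n+1⦌ :=
  SimplexCategory.mkHom
    ⟨fun i => ⟨(α.toOrderHom i : ℕ) - 1, by
        have := (α.toOrderHom i).isLt
        simp only [len_mk] at this ⊢
        omega⟩,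
     fun i j hij => by
      simp only [Fin.mk_le_mk]
      exact Nat.sub_le_sub_right (α.toOrderHom.monotone hij) 1⟩

lemma predHom_apply {m : SimplexCategory} (α : m ⟶ ⦋n+2⦌) (h0 : ∀ i, α.toOrderHom i ≠ 0) (i) :
    ((predHom α h0).toOrderHom i : ℕ) = (α.toOrderHom i : ℕ) - 1 := rfl

lemma predHom_comp {m : SimplexCategory} (α : m ⟶ ⦋n+2⦌) (h0 : ∀ i, α.toOrderHom i ≠ 0) :
    predHom α h0 ≫ δ 0 = α := by
  apply SimplexCategory.Hom.ext
  apply OrderHom.ext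
  funext i
  have h : (α.toOrderHom i : ℕ) ≠ 0 := by
    intro hc
    exact h0 i (Fin.ext (by simpa using hc))
  show (δ (0 : Fin (n+3))).toOrderHom ((predHom α h0).toOrderHom i) = α.toOrderHom i
  have hδ : (δ (0 : Fin (n+3))).toOrderHom ((predHom α h0).toOrderHom i)
      = ((predHom α h0).toOrderHom i).succ := by
    rw [show (δ (0 : Fin (n+3))).toOrderHom ((predHom α h0).toOrderHom i)
      = Fin.succAbove 0 ((predHom α h0).toOrderHom i) from rfl, Fin.zero_succAbove]
  rw [hδ]
  apply Fin.ext
  rw [Fin.val_succ, predHom_apply]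
  omega

/-- Factor a simplex with image in `{0,1}` through the edge. -/
def edgeFactor {m : SimplexCategory} (α : m ⟶ ⦋n+2⦌) (h1 : ∀ i, (α.toOrderHom i : ℕ) ≤ 1) :
    m ⟶ ⦋1⦌ :=
  SimplexCategory.mkHom
    ⟨fun i => ⟨(α.toOrderHom i : ℕ), by have := h1 i; omega⟩,
     fun i j hij => by
      simp only [Fin.mk_le_mk]
      exact α.toOrderHom.monotone hij⟩

lemma edgeFactor_comp {m : SimplexCategory} (α : m ⟶ ⦋n+2⦌)
    (h1 : ∀ i, (α.toOrderHom i : ℕ) ≤ 1) : edgeFactor α h1 ≫ edgeHom n = α := by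
  apply SimplexCategory.Hom.ext
  apply OrderHom.ext
  funext i
  apply Fin.ext
  rfl

lemma comp_edgeHom_le {m : SimplexCategory} (β : m ⟶ ⦋1⦌) (i) :
    (((β ≫ edgeHom n).toOrderHom i : ℕ)) ≤ 1 := by
  have h : ((β ≫ edgeHom n).toOrderHom i : ℕ) = (β.toOrderHom i : ℕ) := rfl
  rw [h]
  have := (β.toOrderHom i).isLt
  simp only [len_mk] at this
  omega

lemma edgeFactor_comp_edgeHom {m : SimplexCategory} (β : m ⟶ ⦋1⦌) (h1) :
    edgeFactor (β ≫ edgeHom n) h1 = β := by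
  apply SimplexCategory.Hom.ext
  apply OrderHom.ext
  funext i
  apply Fin.ext
  rfl

/-- The goodness predicate for the vertex set of a filler simplex. -/
def Sgood (n k : ℕ) (S : Finset (Fin (n+3))) : Prop :=
  (0 : Fin (n+3)) ∈ S ∧ (1 : Fin (n+3)) ∈ S ∧ S.card = k + 3

/-- The monotone injection `⦋k+2⦌ → ⦋n+2⦌` enumerating `S`. -/
def sHom {k : ℕ} (S : Finset (Fin (n+3))) (hS : Sgood n k S) :
    (⦋k+2⦌ : SimplexCategory) ⟶ ⦋n+2⦌ :=
  SimplexCategory.mkHom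
    ⟨fun i => (S.orderIsoOfFin hS.2.2 i : Fin (n+3)),
     fun i j hij => Subtype.coe_le_coe.mpr ((S.orderIsoOfFin hS.2.2).monotone hij)⟩

lemma sHom_mem {k : ℕ} (S : Finset (Fin (n+3))) (hS : Sgood n k S) (i) :
    (sHom S hS).toOrderHom i ∈ S := (S.orderIsoOfFin hS.2.2 i).2

lemma sHom_strictMono {k : ℕ} (S : Finset (Fin (n+3))) (hS : Sgood n k S) :
    StrictMono (sHom S hS).toOrderHom := fun i j hij =>
  Subtype.coe_lt_coe.mpr ((S.orderIsoOfFin hS.2.2).strictMono hij)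

lemma sHom_inj {k : ℕ} (S : Finset (Fin (n+3))) (hS : Sgood n k S) :
    Function.Injective (sHom S hS).toOrderHom := (sHom_strictMono S hS).injective

lemma sHom_symm_apply {k : ℕ} (S : Finset (Fin (n+3))) (hS : Sgood n k S) (a : Fin (n+3))
    (ha : a ∈ S) :
    (sHom S hS).toOrderHom ((S.orderIsoOfFin hS.2.2).symm ⟨a, ha⟩) = a := by
  change ((S.orderIsoOfFin hS.2.2) ((S.orderIsoOfFin hS.2.2).symm ⟨a, ha⟩) : Fin (n+3)) = a
  rw [OrderIso.apply_symm_apply]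

lemma sHom_zero {k : ℕ} (S : Finset (Fin (n+3))) (hS : Sgood n k S) :
    (sHom S hS).toOrderHom 0 = 0 := by
  have h := sHom_symm_apply S hS 0 hS.1
  have hle := (sHom S hS).toOrderHom.monotone
      (Fin.zero_le ((S.orderIsoOfFin hS.2.2).symm ⟨0, hS.1⟩))
  rw [h] at hle
  rw [Fin.le_def] at hle
  apply Fin.ext
  simpa using hle

lemma sHom_one {k : ℕ} (S : Finset (Fin (n+3))) (hS : Sgood n k S) :
    (sHom S hS).toOrderHom 1 = 1 := by
  have h := sHom_symm_apply S hS 1 hS.2.1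
  set j := (S.orderIsoOfFin hS.2.2).symm ⟨1, hS.2.1⟩ with hj
  have hj0 : (j : ℕ) ≠ 0 := by
    intro hc
    have hz : j = 0 := Fin.ext (by simpa using hc)
    rw [hz, sHom_zero S hS] at h
    simp [Fin.ext_iff] at h
  have hj1 : (1 : Fin (k+3)) ≤ j := by
    rw [Fin.le_def]
    simp only [Fin.val_one]
    omega
  have hle : (sHom S hS).toOrderHom 1 ≤ 1 := by
    calc (sHom S hS).toOrderHom 1 ≤ (sHom S hS).toOrderHom j :=
          (sHom S hS).toOrderHom.monotone hj1
    _ = 1 := h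
  have hgt : (0 : Fin (n+3)) < (sHom S hS).toOrderHom 1 := by
    rw [← sHom_zero S hS]
    exact sHom_strictMono S hS (by rw [Fin.lt_def]; simp)
  rw [Fin.le_def] at hle
  rw [Fin.lt_def] at hgt
  apply Fin.ext
  simp only [Fin.val_one] at hle ⊢
  simp only [Fin.val_zero] at hgt
  omega

lemma sHom_two_le {k : ℕ} (S : Finset (Fin (n+3))) (hS : Sgood n k S) (i : Fin (k+3))
    (hi : 2 ≤ (i : ℕ)) : 2 ≤ ((sHom S hS).toOrderHom i : ℕ) := by
  have h1 : (sHom S hS).toOrderHom 1 < (sHom S hS).toOrderHom i :=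
    sHom_strictMono S hS (by rw [Fin.lt_def]; simp; omega)
  rw [sHom_one S hS, Fin.lt_def] at h1
  simp at h1; omega

/-- Factor a simplex with image in `S` through `sHom`. -/
def betaHom {k : ℕ} (S : Finset (Fin (n+3))) (hS : Sgood n k S) {m : SimplexCategory}
    (α : m ⟶ ⦋n+2⦌) (hr : ∀ i, α.toOrderHom i ∈ S) : m ⟶ ⦋k+2⦌ :=
  SimplexCategory.mkHom
    ⟨fun i => (S.orderIsoOfFin hS.2.2).symm ⟨α.toOrderHom i, hr i⟩,
     fun i j hij => (S.orderIsoOfFin hS.2.2).symm.monotone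
       (Subtype.mk_le_mk.mpr (α.toOrderHom.monotone hij))⟩

lemma betaHom_comp {k : ℕ} (S : Finset (Fin (n+3))) (hS : Sgood n k S) {m : SimplexCategory}
    (α : m ⟶ ⦋n+2⦌) (hr : ∀ i, α.toOrderHom i ∈ S) :
    betaHom S hS α hr ≫ sHom S hS = α := by
  apply SimplexCategory.Hom.ext
  apply OrderHom.ext
  funext i
  exact sHom_symm_apply S hS _ (hr i)

lemma betaHom_natural {k : ℕ} (S : Finset (Fin (n+3))) (hS : Sgood n k S)
    {m m' : SimplexCategory} (g : m' ⟶ m) (α : m ⟶ ⦋n+2⦌) (hr : ∀ i, α.toOrderHom i ∈ S)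
    (hr' : ∀ i, (g ≫ α).toOrderHom i ∈ S) :
    betaHom S hS (g ≫ α) hr' = g ≫ betaHom S hS α hr := by
  apply SimplexCategory.Hom.ext
  apply OrderHom.ext
  funext i
  rfl



lemma exists_not_mem {k : ℕ} {m : SimplexCategory} (β : m ⟶ ⦋k+2⦌)
    (hβ : Set.range β.toOrderHom ∪ {(1 : Fin (k+3))} ≠ Set.univ) :
    ∃ j : Fin (k+3), (j : ℕ) ≠ 1 ∧ ∀ i, ((β.toOrderHom i : ℕ)) ≠ (j : ℕ) := by
  by_contra h
  push_neg at h
  apply hβ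
  rw [Set.eq_univ_iff_forall]
  intro j
  by_cases hj : (j : ℕ) = 1
  · exact Or.inr (Fin.ext (by simpa using hj))
  · obtain ⟨i, hi⟩ := h j hj
    exact Or.inl ⟨i, Fin.ext hi⟩

lemma horn_cond_of {k : ℕ} {m : SimplexCategory} (β : m ⟶ ⦋k+2⦌) (j : Fin (k+3))
    (hj1 : (j : ℕ) ≠ 1) (hjr : ∀ i, ((β.toOrderHom i : ℕ)) ≠ (j : ℕ)) :
    Set.range β.toOrderHom ∪ {(1 : Fin (k+3))} ≠ Set.univ := by
  intro hu
  have := (Set.eq_univ_iff_forall.mp hu) j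
  rcases this with ⟨i, hi⟩ | h1
  · exact hjr i (congrArg Fin.val hi)
  · exact hj1 (by simpa using congrArg Fin.val h1)

lemma card_filter_S {k : ℕ} (S : Finset (Fin (n+3))) (hS : Sgood n k S) :
    (S.filter (fun a : Fin (n+3) => 2 ≤ (a : ℕ))).card = k + 1 := by
  have h2 : (S.filter (fun a : Fin (n+3) => ¬ 2 ≤ (a : ℕ))) = ({0, 1} : Finset (Fin (n+3))) := by
    ext j
    simp only [Finset.mem_filter, Finset.mem_insert, Finset.mem_singleton, not_le,
      Fin.ext_iff, Fin.val_zero, Fin.val_one]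
    constructor
    · rintro ⟨_, hlt⟩; omega
    · rintro (h | h)
      · have : j = 0 := Fin.ext (by simpa using h)
        exact ⟨this ▸ hS.1, by omega⟩
      · have : j = 1 := Fin.ext (by simpa using h)
        exact ⟨this ▸ hS.2.1, by omega⟩
  have := Finset.card_filter_add_card_filter_not
    (s := S) (p := fun a : Fin (n+3) => 2 ≤ (a : ℕ))
  rw [h2] at this
  have hc2 : ({0, 1} : Finset (Fin (n+3))).card = 2 := by
    rw [Finset.card_insert_of_notMem (by simp [Fin.ext_iff]), Finset.card_singleton]
  rw [hS.2.2] at this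
  omega

lemma pk_horn {k : ℕ} (S : Finset (Fin (n+3))) (hS : Sgood n k S) {m : SimplexCategory}
    (β : m ⟶ ⦋k+2⦌) (hβ : Set.range β.toOrderHom ∪ {(1 : Fin (k+3))} ≠ Set.univ) :
    Pk k (β ≫ sHom S hS) := by
  obtain ⟨j, hj1', hjr⟩ := exists_not_mem β hβ
  rcases Nat.lt_or_ge (j : ℕ) 2 with hj2 | hj2
  · refine Or.inr (Or.inl fun i hc => ?_)
    have hc' : (sHom S hS).toOrderHom (β.toOrderHom i) = (sHom S hS).toOrderHom 0 := by
      rw [sHom_zero S hS]; exact hc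
    have hci := sHom_inj S hS hc'
    have hval : ((β.toOrderHom i : ℕ)) = 0 := by simpa using congrArg Fin.val hci
    exact hjr i (by omega)
  · refine Or.inr (Or.inr ?_)
    have hsj2 : 2 ≤ ((sHom S hS).toOrderHom j : ℕ) := sHom_two_le S hS j hj2
    have hsub : tset (β ≫ sHom S hS) ⊆
        (S.filter (fun a : Fin (n+3) => 2 ≤ (a : ℕ))).erase ((sHom S hS).toOrderHom j) := by
      intro a ha
      rw [mem_tset] at ha
      obtain ⟨⟨i, hi⟩, h2⟩ := ha
      have hi' : (sHom S hS).toOrderHom (β.toOrderHom i) = a := hi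
      refine Finset.mem_erase.mpr ⟨fun hc => ?_, Finset.mem_filter.mpr ⟨?_, h2⟩⟩
      · have : (sHom S hS).toOrderHom (β.toOrderHom i) = (sHom S hS).toOrderHom j := by
          rw [hi', hc]
        exact hjr i (congrArg Fin.val (sHom_inj S hS this))
      · rw [← hi']; exact sHom_mem S hS _
    have hj_mem : (sHom S hS).toOrderHom j ∈ S.filter (fun a : Fin (n+3) => 2 ≤ (a : ℕ)) :=
      Finset.mem_filter.mpr ⟨sHom_mem S hS j, hsj2⟩
    calc (tset (β ≫ sHom S hS)).card
        ≤ ((S.filter (fun a : Fin (n+3) => 2 ≤ (a : ℕ))).erase ((sHom S hS).toOrderHom j)).card :=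
          Finset.card_le_card hsub
      _ = k + 1 - 1 := by rw [Finset.card_erase_of_mem hj_mem, card_filter_S S hS]
      _ = k := by omega

/-- The vertex set of the filler simplex for a new simplex `α`. -/
def bigS {m : SimplexCategory} (α : m ⟶ ⦋n+2⦌) : Finset (Fin (n+3)) :=
  insert 0 (insert 1 (tset α))

lemma zero_not_mem_tset {m : SimplexCategory} (α : m ⟶ ⦋n+2⦌) : (0 : Fin (n+3)) ∉ tset α := by
  rw [mem_tset]; rintro ⟨_, h2⟩; simp at h2

lemma one_not_mem_tset {m : SimplexCategory} (α : m ⟶ ⦋n+2⦌) : (1 : Fin (n+3)) ∉ tset α := by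
  rw [mem_tset]; rintro ⟨_, h2⟩; simp [Fin.val_one] at h2

lemma tset_card_of_new {k : ℕ} {m : SimplexCategory} {α : m ⟶ ⦋n+2⦌}
    (hk : ¬ Pk k α) (h : Pk (k+1) α) : (tset α).card = k + 1 := by
  unfold Pk at hk h
  push_neg at hk
  obtain ⟨h1, h2, h3⟩ := hk
  rcases h with h | h | h
  · obtain ⟨i, hi⟩ := h1
    have := h i
    omega
  · obtain ⟨i, hi⟩ := h2
    exact absurd hi (h i)
  · omega

lemma bigS_good {k : ℕ} {m : SimplexCategory} {α : m ⟶ ⦋n+2⦌}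
    (hk : ¬ Pk k α) (h : Pk (k+1) α) : Sgood n k (bigS α) := by
  refine ⟨Finset.mem_insert_self _ _,
    Finset.mem_insert_of_mem (Finset.mem_insert_self _ _), ?_⟩
  rw [bigS, Finset.card_insert_of_notMem, Finset.card_insert_of_notMem
    (one_not_mem_tset α), tset_card_of_new hk h]
  rw [Finset.mem_insert]
  push_neg
  exact ⟨by simp [Fin.ext_iff], zero_not_mem_tset α⟩

lemma range_sub_bigS {m : SimplexCategory} (α : m ⟶ ⦋n+2⦌) (i) :
    α.toOrderHom i ∈ bigS α := by
  by_cases h2 : 2 ≤ (α.toOrderHom i : ℕ)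
  · exact Finset.mem_insert_of_mem (Finset.mem_insert_of_mem
      ((mem_tset α).mpr ⟨⟨i, rfl⟩, h2⟩))
  · push_neg at h2
    have h2' : (α.toOrderHom i : ℕ) = 0 ∨ (α.toOrderHom i : ℕ) = 1 := by omega
    rcases h2' with h | h
    · exact Finset.mem_insert.mpr (Or.inl (Fin.ext (by simpa using h)))
    · exact Finset.mem_insert_of_mem (Finset.mem_insert.mpr
        (Or.inl (Fin.ext (by simpa using h))))

section Maps
variable {X Y : SSet}

lemma F_congr {k : ℕ} (F : ∀ ⦃m : SimplexCategoryᵒᵖ⦄ (α : m.unop ⟶ ⦋n+2⦌), Pk k α → X.obj m)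
    {m : SimplexCategoryᵒᵖ} {α α' : m.unop ⟶ ⦋n+2⦌} (h : Pk k α) (h' : Pk k α')
    (e : α = α') : F α h = F α' h' := by subst e; rfl

/-- The horn map built from the partial lift `F`. -/
def hornMap (k : ℕ) (S : Finset (Fin (n+3))) (hS : Sgood n k S)
    (F : ∀ ⦃m : SimplexCategoryᵒᵖ⦄ (α : m.unop ⟶ ⦋n+2⦌), Pk k α → X.obj m)
    (ha : ∀ ⦃m m' : SimplexCategoryᵒᵖ⦄ (g : m ⟶ m') (α : m.unop ⟶ ⦋n+2⦌) (h : Pk k α)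
      (h' : Pk k (g.unop ≫ α)), F (g.unop ≫ α) h' = X.map g (F α h)) :
    (Λ[k+2, 1] : SSet) ⟶ X where
  app m := TypeCat.ofHom fun δ => F (δ.1.down ≫ sHom S hS) (pk_horn S hS _ δ.2)
  naturality m m' g := by
    ext δ
    show F ((g.unop ≫ δ.1.down) ≫ sHom S hS) _ = X.map g (F (δ.1.down ≫ sHom S hS) _)
    calc F ((g.unop ≫ δ.1.down) ≫ sHom S hS) _
        = F (g.unop ≫ (δ.1.down ≫ sHom S hS))
            (Pk_comp g.unop (pk_horn S hS _ δ.2)) :=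
          F_congr F _ _ (Category.assoc _ _ _)
      _ = X.map g (F (δ.1.down ≫ sHom S hS) (pk_horn S hS _ δ.2)) := ha g _ _ _

lemma horn_sq (p : X ⟶ Y) (v : (Δ[n+2] : SSet) ⟶ Y) (k : ℕ) (S : Finset (Fin (n+3)))
    (hS : Sgood n k S)
    (F : ∀ ⦃m : SimplexCategoryᵒᵖ⦄ (α : m.unop ⟶ ⦋n+2⦌), Pk k α → X.obj m)
    (ha : ∀ ⦃m m' : SimplexCategoryᵒᵖ⦄ (g : m ⟶ m') (α : m.unop ⟶ ⦋n+2⦌) (h : Pk k α)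
      (h' : Pk k (g.unop ≫ α)), F (g.unop ≫ α) h' = X.map g (F α h))
    (hb : ∀ ⦃m : SimplexCategoryᵒᵖ⦄ (α : m.unop ⟶ ⦋n+2⦌) (h : Pk k α),
      p.app m (F α h) = v.app m (ULift.up α)) :
    CommSq (hornMap k S hS F ha) ((SSet.horn (k+2) 1).ι) p
      (SSet.stdSimplex.map (sHom S hS) ≫ v) := by
  constructor
  ext m δ
  exact hb (δ.1.down ≫ sHom S hS) (pk_horn S hS _ δ.2)

noncomputable def liftMap (p : X ⟶ Y) (v : (Δ[n+2] : SSet) ⟶ Y) (hp : InnerFibration p)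
    (k : ℕ) (S : Finset (Fin (n+3))) (hS : Sgood n k S)
    (F : ∀ ⦃m : SimplexCategoryᵒᵖ⦄ (α : m.unop ⟶ ⦋n+2⦌), Pk k α → X.obj m)
    (ha : ∀ ⦃m m' : SimplexCategoryᵒᵖ⦄ (g : m ⟶ m') (α : m.unop ⟶ ⦋n+2⦌) (h : Pk k α)
      (h' : Pk k (g.unop ≫ α)), F (g.unop ≫ α) h' = X.map g (F α h))
    (hb : ∀ ⦃m : SimplexCategoryᵒᵖ⦄ (α : m.unop ⟶ ⦋n+2⦌) (h : Pk k α),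
      p.app m (F α h) = v.app m (ULift.up α)) :
    (Δ[k+2] : SSet) ⟶ X :=
  letI : HasLiftingProperty ((SSet.horn (k+2) 1).ι) p :=
    hp (k+2) 1 (by simp) (by simp only [Fin.val_one]; omega)
  (horn_sq p v k S hS F ha hb).lift

lemma liftMap_app_horn (p : X ⟶ Y) (v : (Δ[n+2] : SSet) ⟶ Y) (hp : InnerFibration p)
    (k : ℕ) (S : Finset (Fin (n+3))) (hS : Sgood n k S) (F) (ha) (hb)
    {m : SimplexCategoryᵒᵖ} (β : m.unop ⟶ ⦋k+2⦌)
    (hβ : Set.range β.toOrderHom ∪ {(1 : Fin (k+3))} ≠ Set.univ)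
    (hP : Pk k (β ≫ sHom S hS)) :
    (liftMap p v hp k S hS F ha hb).app m (ULift.up β) = F (β ≫ sHom S hS) hP := by
  letI : HasLiftingProperty ((SSet.horn (k+2) 1).ι) p :=
    hp (k+2) 1 (by simp) (by simp only [Fin.val_one]; omega)
  have h := (horn_sq p v k S hS F ha hb).fac_left
  have h2 := ConcreteCategory.congr_hom (congr_app h m)
    (⟨ULift.up β, hβ⟩ : (Λ[k+2, 1] : SSet).obj m)
  exact h2

lemma liftMap_p (p : X ⟶ Y) (v : (Δ[n+2] : SSet) ⟶ Y) (hp : InnerFibration p)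
    (k : ℕ) (S : Finset (Fin (n+3))) (hS : Sgood n k S) (F) (ha) (hb)
    {m : SimplexCategoryᵒᵖ} (x : (Δ[k+2] : SSet).obj m) :
    p.app m ((liftMap p v hp k S hS F ha hb).app m x) =
      v.app m (ULift.up (x.down ≫ sHom S hS)) := by
  letI : HasLiftingProperty ((SSet.horn (k+2) 1).ι) p :=
    hp (k+2) 1 (by simp) (by simp only [Fin.val_one]; omega)
  have h := (horn_sq p v k S hS F ha hb).fac_right
  exact ConcreteCategory.congr_hom (congr_app h m) x

lemma liftMap_natural (p : X ⟶ Y) (v : (Δ[n+2] : SSet) ⟶ Y) (hp : InnerFibration p)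
    (k : ℕ) (S : Finset (Fin (n+3))) (hS : Sgood n k S) (F) (ha) (hb)
    {m m' : SimplexCategoryᵒᵖ} (g : m ⟶ m') (β : m.unop ⟶ ⦋k+2⦌) :
    (liftMap p v hp k S hS F ha hb).app m' (ULift.up (g.unop ≫ β)) =
      X.map g ((liftMap p v hp k S hS F ha hb).app m (ULift.up β)) :=
  types_congr_hom ((liftMap p v hp k S hS F ha hb).naturality g) (ULift.up β)

end Maps

lemma betaHom_apply {k : ℕ} (S : Finset (Fin (n+3))) (hS : Sgood n k S) {m : SimplexCategory}
    (α : m ⟶ ⦋n+2⦌) (hr : ∀ i, α.toOrderHom i ∈ S) (i) :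
    (sHom S hS).toOrderHom ((betaHom S hS α hr).toOrderHom i) = α.toOrderHom i :=
  sHom_symm_apply S hS _ (hr i)


lemma comp_const {a b c : SimplexCategory} (f : a ⟶ b) (j : Fin (c.len + 1)) :
    f ≫ SimplexCategory.const b c j = SimplexCategory.const a c j := by
  apply SimplexCategory.Hom.ext
  rfl

/-- From `Pk k α` deduce the horn condition for `betaHom`. -/
lemma horn_cond_of_Pk {k : ℕ} {m : SimplexCategory} (S : Finset (Fin (n+3))) (hS : Sgood n k S)
    (α : m ⟶ ⦋n+2⦌) (hr : ∀ i, α.toOrderHom i ∈ S) (hP : Pk k α) :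
    Set.range (betaHom S hS α hr).toOrderHom ∪ {(1 : Fin (k+3))} ≠ Set.univ := by
  rcases hP with h | h | h
  · -- all values ≤ 1 : use the last vertex
    refine horn_cond_of _ (Fin.last (k+2)) (by simp [Fin.val_last]) fun i heq => ?_
    have hb : (betaHom S hS α hr).toOrderHom i = Fin.last (k+2) := Fin.ext (by simpa using heq)
    have h2 := sHom_two_le S hS (Fin.last (k+2)) (by simp [Fin.val_last])
    have hv := betaHom_apply S hS α hr i
    rw [hb] at hv
    have := h i
    omega
  · -- avoids 0 : use the vertex 0
    refine horn_cond_of _ 0 (by simp) fun i heq => ?_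
    have hb : (betaHom S hS α hr).toOrderHom i = 0 := Fin.ext (by simpa using heq)
    have hv := betaHom_apply S hS α hr i
    rw [hb, sHom_zero S hS] at hv
    exact h i hv.symm
  · -- small tset : use a missing high vertex
    have hsub : tset α ⊆ S.filter (fun a : Fin (n+3) => 2 ≤ (a : ℕ)) := by
      intro a ha
      rw [mem_tset] at ha
      obtain ⟨⟨i, hi⟩, h2⟩ := ha
      exact Finset.mem_filter.mpr ⟨hi ▸ hr i, h2⟩
    have hlt : (tset α).card < (S.filter (fun a : Fin (n+3) => 2 ≤ (a : ℕ))).card := by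
      rw [card_filter_S S hS]; omega
    obtain ⟨t, htS, htn⟩ := Finset.exists_of_ssubset
      (Finset.ssubset_iff_subset_ne.mpr ⟨hsub, fun he => by rw [he] at hlt; omega⟩)
    have ht2 : 2 ≤ (t : ℕ) := (Finset.mem_filter.mp htS).2
    have htS' : t ∈ S := (Finset.mem_filter.mp htS).1
    set j := (S.orderIsoOfFin hS.2.2).symm ⟨t, htS'⟩ with hj
    have hsj : (sHom S hS).toOrderHom j = t := sHom_symm_apply S hS t htS'
    refine horn_cond_of _ j (fun hc => ?_) fun i heq => ?_
    · have hj1 : j = 1 := Fin.ext (by simpa using hc)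
      rw [hj1, sHom_one S hS] at hsj
      rw [← hsj] at ht2
      simp [Fin.val_one] at ht2
    · have hb : (betaHom S hS α hr).toOrderHom i = j := Fin.ext (by simpa using heq)
      have hv := betaHom_apply S hS α hr i
      rw [hb, hsj] at hv
      exact htn ((mem_tset α).mpr ⟨⟨i, hv.symm⟩, ht2⟩)

section F0
variable {X Y : SSet}
variable (e : (Δ[1] : SSet) ⟶ X) (σ : (Δ[n+1] : SSet) ⟶ X)

lemma Pk0_le_one {m : SimplexCategory} {α : m ⟶ ⦋n+2⦌} (h : Pk 0 α)
    (h0 : ¬ ∀ i, α.toOrderHom i ≠ 0) : ∀ i, (α.toOrderHom i : ℕ) ≤ 1 := by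
  rcases h with h | h | h
  · exact h
  · exact absurd h h0
  · intro i
    by_contra hc
    push_neg at hc
    have hm : α.toOrderHom i ∈ tset α := (mem_tset α).mpr ⟨⟨i, rfl⟩, hc⟩
    have := Finset.card_pos.mpr ⟨_, hm⟩
    omega

noncomputable def F0 {m : SimplexCategoryᵒᵖ} (α : m.unop ⟶ ⦋n+2⦌) (h : Pk 0 α) : X.obj m :=
  if h0 : ∀ i, α.toOrderHom i ≠ 0 then
    σ.app m (ULift.up (predHom α h0))
  else
    e.app m (ULift.up (edgeFactor α (Pk0_le_one h h0)))

lemma const_compat (heσ : v₁ ≫ e = v₀ n ≫ σ) (m : SimplexCategoryᵒᵖ) :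
    e.app m (ULift.up (SimplexCategory.const m.unop ⦋1⦌ 1)) =
      σ.app m (ULift.up (SimplexCategory.const m.unop ⦋n+1⦌ 0)) := by
  have h := types_congr_hom (congr_app heσ m)
    (ULift.up (SimplexCategory.const m.unop ⦋0⦌ 0))
  have h1 : (v₁ ≫ e).app m (ULift.up (SimplexCategory.const m.unop ⦋0⦌ 0)) =
      e.app m (ULift.up (SimplexCategory.const m.unop ⦋1⦌ 1)) := by
    show e.app m (ULift.up (SimplexCategory.const m.unop ⦋0⦌ 0 ≫
      SimplexCategory.const ⦋0⦌ ⦋1⦌ 1)) = _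
    rw [comp_const]
  have h2 : (v₀ n ≫ σ).app m (ULift.up (SimplexCategory.const m.unop ⦋0⦌ 0)) =
      σ.app m (ULift.up (SimplexCategory.const m.unop ⦋n+1⦌ 0)) := by
    show σ.app m (ULift.up (SimplexCategory.const m.unop ⦋0⦌ 0 ≫
      SimplexCategory.const ⦋0⦌ ⦋n+1⦌ 0)) = _
    rw [comp_const]
  rw [← h1, ← h2, h]

lemma F0_p (p : X ⟶ Y) (v : (Δ[n+2] : SSet) ⟶ Y)
    (hev : e ≫ p = SSet.stdSimplex.map (edgeHom n) ≫ v)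
    (hσv : σ ≫ p = SSet.stdSimplex.map (δ (0 : Fin (n+3))) ≫ v)
    {m : SimplexCategoryᵒᵖ} (α : m.unop ⟶ ⦋n+2⦌) (h : Pk 0 α) :
    p.app m (F0 e σ α h) = v.app m (ULift.up α) := by
  unfold F0
  split_ifs with h0
  · have hh := types_congr_hom (congr_app hσv m) (ULift.up (predHom α h0))
    refine hh.trans ?_
    show v.app m (ULift.up (predHom α h0 ≫ δ 0)) = _
    rw [predHom_comp α h0]
  · have hh := types_congr_hom (congr_app hev m)
      (ULift.up (edgeFactor α (Pk0_le_one h h0)))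
    refine hh.trans ?_
    show v.app m (ULift.up (edgeFactor α (Pk0_le_one h h0) ≫ edgeHom n)) = _
    rw [edgeFactor_comp]

lemma F0_nat (heσ : v₁ ≫ e = v₀ n ≫ σ) {m m' : SimplexCategoryᵒᵖ} (g : m ⟶ m')
    (α : m.unop ⟶ ⦋n+2⦌) (h : Pk 0 α) (h' : Pk 0 (g.unop ≫ α)) :
    F0 e σ (g.unop ≫ α) h' = X.map g (F0 e σ α h) := by
  unfold F0
  by_cases h0 : ∀ i, α.toOrderHom i ≠ 0
  · have h0' : ∀ i, (g.unop ≫ α).toOrderHom i ≠ 0 := fun i => h0 _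
    rw [dif_pos h0', dif_pos h0]
    rw [show predHom (g.unop ≫ α) h0' = g.unop ≫ predHom α h0 from by
      apply SimplexCategory.Hom.ext; apply OrderHom.ext; funext i; apply Fin.ext; rfl]
    exact types_congr_hom (σ.naturality g) (ULift.up (predHom α h0))
  · have hle := Pk0_le_one h h0
    by_cases h0' : ∀ i, (g.unop ≫ α).toOrderHom i ≠ 0
    · rw [dif_pos h0', dif_neg h0]
      have h1 : ∀ i, ((g.unop ≫ α).toOrderHom i : ℕ) = 1 := fun i => by
        have ha := hle (g.unop.toOrderHom i)
        have hb : (g.unop ≫ α).toOrderHom i ≠ 0 := h0' i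
        have hb' : ((g.unop ≫ α).toOrderHom i : ℕ) ≠ 0 := fun hc => hb (Fin.ext (by simpa using hc))
        have hc : ((g.unop ≫ α).toOrderHom i : ℕ) = (α.toOrderHom (g.unop.toOrderHom i) : ℕ) := rfl
        omega
      rw [show predHom (g.unop ≫ α) h0' = SimplexCategory.const m'.unop ⦋n+1⦌ 0 from by
        apply SimplexCategory.Hom.ext; apply OrderHom.ext; funext i; apply Fin.ext
        rw [predHom_apply]
        have := h1 i
        show _ = ((SimplexCategory.const m'.unop ⦋n+1⦌ 0).toOrderHom i : ℕ)
        rw [show ((SimplexCategory.const m'.unop ⦋n+1⦌ 0).toOrderHom i : ℕ) = 0 from rfl]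
        omega]
      rw [← const_compat e σ heσ m']
      rw [show SimplexCategory.const m'.unop ⦋1⦌ 1 = g.unop ≫ edgeFactor α hle from by
        apply SimplexCategory.Hom.ext; apply OrderHom.ext; funext i; apply Fin.ext
        show (1 : ℕ) = ((edgeFactor α hle).toOrderHom (g.unop.toOrderHom i) : ℕ)
        rw [show ((edgeFactor α hle).toOrderHom (g.unop.toOrderHom i) : ℕ)
          = (α.toOrderHom (g.unop.toOrderHom i) : ℕ) from rfl]
        have := h1 i
        rw [show ((g.unop ≫ α).toOrderHom i : ℕ) = (α.toOrderHom (g.unop.toOrderHom i) : ℕ)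
          from rfl] at this
        omega]
      exact types_congr_hom (e.naturality g) (ULift.up (edgeFactor α hle))
    · rw [dif_neg h0', dif_neg h0]
      rw [show edgeFactor (g.unop ≫ α) (Pk0_le_one h' h0') = g.unop ≫ edgeFactor α hle from by
        apply SimplexCategory.Hom.ext; apply OrderHom.ext; funext i; apply Fin.ext; rfl]
      exact types_congr_hom (e.naturality g) (ULift.up (edgeFactor α hle))

lemma F0_edge (heσ : v₁ ≫ e = v₀ n ≫ σ) {m : SimplexCategoryᵒᵖ} (β : m.unop ⟶ ⦋1⦌)
    (h : Pk 0 (β ≫ edgeHom n)) :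
    F0 e σ (β ≫ edgeHom n) h = e.app m (ULift.up β) := by
  unfold F0
  split_ifs with h0
  · have hβ1 : ∀ i, (β.toOrderHom i : ℕ) = 1 := fun i => by
      have h1 := comp_edgeHom_le (n := n) β i
      have h2 : ((β ≫ edgeHom n).toOrderHom i : ℕ) ≠ 0 := fun hc =>
        h0 i (Fin.ext (by simpa using hc))
      have h3 : ((β ≫ edgeHom n).toOrderHom i : ℕ) = (β.toOrderHom i : ℕ) := rfl
      omega
    rw [show predHom (β ≫ edgeHom n) h0 = SimplexCategory.const m.unop ⦋n+1⦌ 0 from by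
      apply SimplexCategory.Hom.ext; apply OrderHom.ext; funext i; apply Fin.ext
      rw [predHom_apply]
      have h3 : ((β ≫ edgeHom n).toOrderHom i : ℕ) = (β.toOrderHom i : ℕ) := rfl
      have := hβ1 i
      show _ = ((SimplexCategory.const m.unop ⦋n+1⦌ 0).toOrderHom i : ℕ)
      rw [show ((SimplexCategory.const m.unop ⦋n+1⦌ 0).toOrderHom i : ℕ) = 0 from rfl]
      omega]
    rw [show (ULift.up β : (Δ[1] : SSet).obj m) = ULift.up (SimplexCategory.const m.unop ⦋1⦌ 1)
      from congrArg ULift.up (by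
        apply SimplexCategory.Hom.ext; apply OrderHom.ext; funext i; apply Fin.ext
        have := hβ1 i
        show (β.toOrderHom i : ℕ) = ((SimplexCategory.const m.unop ⦋1⦌ 1).toOrderHom i : ℕ)
        rw [show ((SimplexCategory.const m.unop ⦋1⦌ 1).toOrderHom i : ℕ) = 1 from rfl]
        omega)]
    exact (const_compat e σ heσ m).symm
  · exact congrArg (e.app m) (congrArg ULift.up (edgeFactor_comp_edgeHom β _))

lemma comp_δ_apply {m : SimplexCategory} (γ : m ⟶ ⦋n+1⦌) (i) :
    ((γ ≫ δ (0 : Fin (n+3))).toOrderHom i : ℕ) = (γ.toOrderHom i : ℕ) + 1 := by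
  show ((δ (0 : Fin (n+3))).toOrderHom (γ.toOrderHom i) : ℕ) = _
  rw [show (δ (0 : Fin (n+3))).toOrderHom (γ.toOrderHom i)
    = Fin.succAbove 0 (γ.toOrderHom i) from rfl, Fin.zero_succAbove, Fin.val_succ]

lemma F0_cone {m : SimplexCategoryᵒᵖ} (γ : m.unop ⟶ ⦋n+1⦌) (h : Pk 0 (γ ≫ δ 0)) :
    F0 e σ (γ ≫ δ 0) h = σ.app m (ULift.up γ) := by
  unfold F0
  have h0 : ∀ i, (γ ≫ δ (0 : Fin (n+3))).toOrderHom i ≠ 0 := fun i hc => by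
    have := comp_δ_apply γ i
    rw [hc] at this
    simp at this
  rw [dif_pos h0]
  refine congrArg (σ.app m) (congrArg ULift.up ?_)
  apply SimplexCategory.Hom.ext; apply OrderHom.ext; funext i; apply Fin.ext
  rw [predHom_apply, comp_δ_apply]
  omega

end F0
section Step
variable {X Y : SSet} (p : X ⟶ Y) (v : (Δ[n+2] : SSet) ⟶ Y) (hp : InnerFibration p)

instance {k : ℕ} {m : SimplexCategory} (α : m ⟶ ⦋n+2⦌) : Decidable (Pk k α) := by
  unfold Pk; infer_instance

noncomputable def Fstep (k : ℕ)
    (F : ∀ ⦃m : SimplexCategoryᵒᵖ⦄ (α : m.unop ⟶ ⦋n+2⦌), Pk k α → X.obj m)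
    (ha : ∀ ⦃m m' : SimplexCategoryᵒᵖ⦄ (g : m ⟶ m') (α : m.unop ⟶ ⦋n+2⦌) (h : Pk k α)
      (h' : Pk k (g.unop ≫ α)), F (g.unop ≫ α) h' = X.map g (F α h))
    (hb : ∀ ⦃m : SimplexCategoryᵒᵖ⦄ (α : m.unop ⟶ ⦋n+2⦌) (h : Pk k α),
      p.app m (F α h) = v.app m (ULift.up α)) :
    ∀ ⦃m : SimplexCategoryᵒᵖ⦄ (α : m.unop ⟶ ⦋n+2⦌), Pk (k+1) α → X.obj m :=
  fun m α h =>
    if hk : Pk k α then F α hk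
    else (liftMap p v hp k (bigS α) (bigS_good hk h) F ha hb).app m
      (ULift.up (betaHom (bigS α) (bigS_good hk h) α (range_sub_bigS α)))

lemma Fstep_old (k : ℕ) (F) (ha) (hb) {m : SimplexCategoryᵒᵖ} (α : m.unop ⟶ ⦋n+2⦌)
    (h : Pk (k+1) α) (hk : Pk k α) :
    Fstep p v hp k F ha hb α h = F α hk := by
  unfold Fstep
  rw [dif_pos hk]

lemma Fstep_new (k : ℕ) (F) (ha) (hb) {m : SimplexCategoryᵒᵖ} (α : m.unop ⟶ ⦋n+2⦌)
    (h : Pk (k+1) α) (hk : ¬ Pk k α) (S : Finset (Fin (n+3))) (hSe : bigS α = S)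
    (hS : Sgood n k S) (hr : ∀ i, α.toOrderHom i ∈ S) :
    Fstep p v hp k F ha hb α h =
      (liftMap p v hp k S hS F ha hb).app m (ULift.up (betaHom S hS α hr)) := by
  subst hSe
  unfold Fstep
  rw [dif_neg hk]

lemma Fstep_nat (k : ℕ) (F) (ha) (hb) {m m' : SimplexCategoryᵒᵖ} (g : m ⟶ m')
    (α : m.unop ⟶ ⦋n+2⦌) (h : Pk (k+1) α) (h' : Pk (k+1) (g.unop ≫ α)) :
    Fstep p v hp k F ha hb (g.unop ≫ α) h' = X.map g (Fstep p v hp k F ha hb α h) := by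
  by_cases hk : Pk k α
  · have hk' : Pk k (g.unop ≫ α) := Pk_comp g.unop hk
    rw [Fstep_old p v hp k F ha hb (g.unop ≫ α) h' hk',
        Fstep_old p v hp k F ha hb α h hk]
    exact ha g α hk hk'
  · have hr := range_sub_bigS α
    have hS := bigS_good hk h
    have hr' : ∀ i, (g.unop ≫ α).toOrderHom i ∈ bigS α := fun i => hr _
    by_cases hk' : Pk k (g.unop ≫ α)
    · rw [Fstep_new p v hp k F ha hb α h hk (bigS α) rfl hS hr,
          ← liftMap_natural p v hp k (bigS α) hS F ha hb g (betaHom (bigS α) hS α hr),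
          Fstep_old p v hp k F ha hb (g.unop ≫ α) h' hk']
      have hβn : betaHom (bigS α) hS (g.unop ≫ α) hr' = g.unop ≫ betaHom (bigS α) hS α hr :=
        betaHom_natural (bigS α) hS g.unop α hr hr'
      have hhc := horn_cond_of_Pk (bigS α) hS (g.unop ≫ α) hr' hk'
      rw [hβn] at hhc
      rw [liftMap_app_horn p v hp k (bigS α) hS F ha hb _ hhc
        (pk_horn (bigS α) hS _ hhc)]
      refine F_congr F _ _ ?_
      rw [Category.assoc, betaHom_comp]
    · have c1 := tset_card_of_new hk h
      have c2 := tset_card_of_new hk' h'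
      have hTeq : tset (g.unop ≫ α) = tset α :=
        Finset.eq_of_subset_of_card_le (tset_comp_subset g.unop α) (by omega)
      have hSeq : bigS (g.unop ≫ α) = bigS α := by rw [bigS, bigS, hTeq]
      rw [Fstep_new p v hp k F ha hb (g.unop ≫ α) h' hk' (bigS α) hSeq hS hr',
          Fstep_new p v hp k F ha hb α h hk (bigS α) rfl hS hr,
          betaHom_natural (bigS α) hS g.unop α hr hr']
      exact liftMap_natural p v hp k (bigS α) hS F ha hb g _

lemma Fstep_p (k : ℕ) (F) (ha) (hb) {m : SimplexCategoryᵒᵖ} (α : m.unop ⟶ ⦋n+2⦌)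
    (h : Pk (k+1) α) :
    p.app m (Fstep p v hp k F ha hb α h) = v.app m (ULift.up α) := by
  by_cases hk : Pk k α
  · rw [Fstep_old p v hp k F ha hb α h hk]
    exact hb α hk
  · rw [Fstep_new p v hp k F ha hb α h hk (bigS α) rfl (bigS_good hk h) (range_sub_bigS α),
        liftMap_p p v hp k (bigS α) (bigS_good hk h) F ha hb
          (ULift.up (betaHom (bigS α) (bigS_good hk h) α (range_sub_bigS α)))]
    exact congrArg (v.app m) (congrArg ULift.up (betaHom_comp _ _ _ _))

end Step

section Main
variable {X Y : SSet} (p : X ⟶ Y) (v : (Δ[n+2] : SSet) ⟶ Y)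
  (e : (Δ[1] : SSet) ⟶ X) (σ : (Δ[n+1] : SSet) ⟶ X)

theorem main (hp : InnerFibration p)
    (hev : e ≫ p = SSet.stdSimplex.map (edgeHom n) ≫ v)
    (hσv : σ ≫ p = SSet.stdSimplex.map (δ (0 : Fin (n+3))) ≫ v)
    (heσ : v₁ ≫ e = v₀ n ≫ σ) (k : ℕ) :
    ∃ F : ∀ ⦃m : SimplexCategoryᵒᵖ⦄ (α : m.unop ⟶ ⦋n+2⦌), Pk k α → X.obj m,
      (∀ ⦃m m' : SimplexCategoryᵒᵖ⦄ (g : m ⟶ m') (α : m.unop ⟶ ⦋n+2⦌) (h : Pk k α)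
        (h' : Pk k (g.unop ≫ α)), F (g.unop ≫ α) h' = X.map g (F α h)) ∧
      (∀ ⦃m : SimplexCategoryᵒᵖ⦄ (α : m.unop ⟶ ⦋n+2⦌) (h : Pk k α),
        p.app m (F α h) = v.app m (ULift.up α)) ∧
      (∀ ⦃m : SimplexCategoryᵒᵖ⦄ (α : m.unop ⟶ ⦋n+2⦌) (h0 : Pk 0 α) (h : Pk k α),
        F α h = F0 e σ α h0) := by
  induction k with
  | zero =>
      exact ⟨fun m α h => F0 e σ α h,
        fun m m' g α h h' => F0_nat e σ heσ g α h h',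
        fun m α h => F0_p e σ p v hev hσv α h,
        fun m α h0 h => rfl⟩
  | succ k IH =>
      obtain ⟨F, ha, hb, hc⟩ := IH
      refine ⟨Fstep p v hp k F ha hb,
        fun m m' g α h h' => Fstep_nat p v hp k F ha hb g α h h',
        fun m α h => Fstep_p p v hp k F ha hb α h,
        fun m α h0 h => ?_⟩
      have hk : Pk k α := Pk_mono (Nat.zero_le k) h0
      rw [Fstep_old p v hp k F ha hb α h hk]
      exact hc α h0 hk

end Main

end Stmt18Aux

open Stmt18Aux in
/-- The inclusion `Δ¹ ∪_{Δ⁰} Δ^{n+1} → Δ^{n+2}`, gluing the edge `Δ¹ = Δ¹ ⋆ ∅` to the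
cone `Δ^{n+1} = Δ⁰ ⋆ Δⁿ` along the vertex `Δ⁰`, is inner anodyne. -/
theorem stmt18 (n : ℕ) :
    InnerAnodyne (pushout.desc (initialEdge.{u} n) (coneFace n) (square_comm n)) := by
  intro X Y p hp
  constructor
  intro u w sq
  have hev : (pushout.inl v₁.{u} (v₀.{u} n) ≫ u) ≫ p = SSet.stdSimplex.map (edgeHom n) ≫ w := by
    rw [Category.assoc, sq.w, ← Category.assoc, pushout.inl_desc]
    rfl
  have hσv : (pushout.inr v₁.{u} (v₀.{u} n) ≫ u) ≫ p =
      SSet.stdSimplex.map (SimplexCategory.δ (0 : Fin (n+3))) ≫ w := by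
    rw [Category.assoc, sq.w, ← Category.assoc, pushout.inr_desc]
    rfl
  have heσ : v₁ ≫ (pushout.inl v₁.{u} (v₀.{u} n) ≫ u) = v₀ n ≫ (pushout.inr v₁.{u} (v₀.{u} n) ≫ u) := by
    rw [← Category.assoc, ← Category.assoc, pushout.condition]
  obtain ⟨F, ha, hb, hc⟩ :=
    main p w (pushout.inl v₁.{u} (v₀.{u} n) ≫ u) (pushout.inr v₁.{u} (v₀.{u} n) ≫ u) hp hev hσv heσ (n+1)
  let L : (Δ[n+2] : SSet) ⟶ X :=
    { app := fun m => TypeCat.ofHom fun x => F x.down (Pk_top x.down)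
      naturality := fun m m' g => by
        ext x
        exact ha g x.down (Pk_top x.down) (Pk_top (g.unop ≫ x.down)) }
  constructor
  refine ⟨⟨L, ?_, ?_⟩⟩
  · apply pushout.hom_ext
    · rw [← Category.assoc, pushout.inl_desc]
      ext m x
      show F (x.down ≫ edgeHom n) (Pk_top _) = (pushout.inl v₁.{u} (v₀.{u} n) ≫ u).app m x
      have hP0 : Pk 0 (x.down ≫ edgeHom n) := Or.inl (comp_edgeHom_le x.down)
      exact (hc (x.down ≫ edgeHom n) hP0 (Pk_top _)).trans
        (F0_edge (pushout.inl v₁.{u} (v₀.{u} n) ≫ u) (pushout.inr v₁.{u} (v₀.{u} n) ≫ u) heσ x.down hP0)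
    · rw [← Category.assoc, pushout.inr_desc]
      ext m x
      show F (x.down ≫ SimplexCategory.δ (0 : Fin (n+3))) (Pk_top _) =
        (pushout.inr v₁.{u} (v₀.{u} n) ≫ u).app m x
      have hP0 : Pk 0 (x.down ≫ SimplexCategory.δ (0 : Fin (n+3))) :=
        Or.inr (Or.inl fun i hcon => by
          have h2 := comp_δ_apply x.down i
          rw [hcon] at h2
          simp at h2)
      exact (hc (x.down ≫ SimplexCategory.δ (0 : Fin (n+3))) hP0 (Pk_top _)).trans
        (F0_cone (pushout.inl v₁.{u} (v₀.{u} n) ≫ u) (pushout.inr v₁.{u} (v₀.{u} n) ≫ u) x.down hP0)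
  · ext m x
    exact hb x.down (Pk_top x.down)
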